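/- Let N ≥ 2, β ∈ (0,1) and ϱ > −N. Then there exists a constant c > 1, depending only on ϱ, β and N, such that for every ε ≥ 0, every u : ℝ^{N-1} → ℝ of class C^{1,β}, and all s, t ∈ ℝ^{N-1} with t ≠ 0: |𝒦_{ϱ,ε}(u,s,t) − 𝒦_{ϱ,ε}(u,s,−t)| ≤ c (1 + ‖u‖_{C^{1,β}})^c · min(|t|^β, 1), where 𝒦_{ϱ,ε}(u,s,t) := ( 1 + ((u(s) − u(s−t))/|t|)² + |t|^{−2}ε² )^{−(N+ϱ)/2}. -/

import Mathlib

open MeasureTheory Real Filter Topology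
open scoped Classical

noncomputable section

abbrev ES (m : ℕ) : Type := EuclideanSpace ℝ (Fin (m + 1))

/-- `u` is of class `C^{1,β}`. -/
def IsC1Beta {n : ℕ} (β : ℝ) (u : EuclideanSpace ℝ (Fin n) → ℝ) : Prop :=
  ContDiff ℝ 1 u ∧ (∃ C, ∀ x, |u x| ≤ C) ∧ (∃ C, ∀ x, ‖fderiv ℝ u x‖ ≤ C) ∧
    (∃ C, ∀ x y, ‖fderiv ℝ u x - fderiv ℝ u y‖ ≤ C * ‖x - y‖ ^ β)

/-- The `β`-Hölder seminorm of the gradient of `u`. -/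
def holderSemi {n : ℕ} (β : ℝ) (u : EuclideanSpace ℝ (Fin n) → ℝ) : ℝ :=
  ⨆ p : EuclideanSpace ℝ (Fin n) × EuclideanSpace ℝ (Fin n),
    if p.1 = p.2 then 0 else ‖fderiv ℝ u p.1 - fderiv ℝ u p.2‖ / ‖p.1 - p.2‖ ^ β

/-- The `C^{1,β}` norm: `sup |u| + sup |∇u| + [∇u]_β`. -/
def c1betaNorm {n : ℕ} (β : ℝ) (u : EuclideanSpace ℝ (Fin n) → ℝ) : ℝ :=
  (⨆ x, |u x|) + (⨆ x, ‖fderiv ℝ u x‖) + holderSemi β u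

/-- The kernel `𝒦_{ϱ,ε}(u,s,t) = (1 + ((u(s)-u(s-t))/|t|)² + ε²/|t|²)^{-(N+ϱ)/2}`,
with `N = m + 2`. -/
def Kker (m : ℕ) (ϱ ε : ℝ) (u : ES m → ℝ) (s t : ES m) : ℝ :=
  (1 + ((u s - u (s - t)) / ‖t‖) ^ 2 + ε ^ 2 / ‖t‖ ^ 2) ^ (-(((m : ℝ) + 2 + ϱ) / 2))

lemma rpow_lip {p : ℝ} (hp : 0 < p) {x y : ℝ} (hx : 1 ≤ x) (hy : 1 ≤ y) :
    |x ^ (-p) - y ^ (-p)| ≤ p * |x - y| := by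
  have key := Convex.norm_image_sub_le_of_norm_hasDerivWithin_le
    (f := fun z : ℝ => z ^ (-p)) (f' := fun z => (-p) * z ^ (-p - 1)) (s := Set.Ici (1:ℝ))
    (C := p)
    (fun z hz => (Real.hasDerivAt_rpow_const
      (Or.inl (by have : (1:ℝ) ≤ z := hz; linarith))).hasDerivWithinAt)
    (fun z hz => by
      have hz1 : (1:ℝ) ≤ z := hz
      have h1 : z ^ (-p - 1) ≤ 1 :=
        Real.rpow_le_one_of_one_le_of_nonpos hz1 (by linarith)
      have h2 : 0 ≤ z ^ (-p - 1) := Real.rpow_nonneg (by linarith) _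
      rw [Real.norm_eq_abs, abs_mul, abs_neg, abs_of_pos hp, abs_of_nonneg h2]
      nlinarith)
    (convex_Ici 1) hy hx
  simpa [Real.norm_eq_abs] using key

/-- the odd-part estimate
`|𝒦_{ϱ,ε}(u,s,t) - 𝒦_{ϱ,ε}(u,s,-t)| ≤ c (1 + ‖u‖_{C^{1,β}})^c min(|t|^β, 1)`, with a constant
`c > 1` depending only on `ϱ, β, N`.  Here `N = m + 2 ≥ 2` and `ϱ > -N`. -/
theorem statement_18 (m : ℕ) (β ϱ : ℝ) (hβ : β ∈ Set.Ioo (0 : ℝ) 1)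
    (hϱ : -((m : ℝ) + 2) < ϱ) :
    ∃ c > 1, ∀ ε : ℝ, 0 ≤ ε → ∀ u : ES m → ℝ, IsC1Beta β u →
      ∀ s t : ES m, t ≠ 0 →
        |Kker m ϱ ε u s t - Kker m ϱ ε u s (-t)|
          ≤ c * (1 + c1betaNorm β u) ^ c * min (‖t‖ ^ β) 1 := by
  obtain ⟨hβ0, hβ1⟩ := hβ
  set p : ℝ := ((m : ℝ) + 2 + ϱ) / 2 with hp_def
  have hp : 0 < p := by simp only [hp_def]; linarith
  set c : ℝ := max (4 * p) 2 with hc_def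
  have hc2 : (2:ℝ) ≤ c := le_max_right _ _
  have hc1 : (1:ℝ) < c := lt_of_lt_of_le one_lt_two hc2
  refine ⟨c, hc1, ?_⟩
  intro ε hε u hu s t ht
  obtain ⟨hcd, ⟨Cu, hCu⟩, ⟨Cg, hCg⟩, ⟨Ch, hCh⟩⟩ := hu
  have hdiff : Differentiable ℝ u := hcd.differentiable one_ne_zero
  set M : ℝ := ⨆ x, ‖fderiv ℝ u x‖ with hM_def
  set S : ℝ := ⨆ x, |u x| with hS_def
  set H : ℝ := holderSemi β u with hH_def
  have hMb : BddAbove (Set.range fun x : ES m => ‖fderiv ℝ u x‖) :=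
    ⟨Cg, by rintro _ ⟨x, rfl⟩; exact hCg x⟩
  have hM : ∀ x, ‖fderiv ℝ u x‖ ≤ M := fun x => le_ciSup hMb x
  have hM0 : 0 ≤ M := le_trans (norm_nonneg _) (hM 0)
  have hSb : BddAbove (Set.range fun x : ES m => |u x|) :=
    ⟨Cu, by rintro _ ⟨x, rfl⟩; exact hCu x⟩
  have hS0 : 0 ≤ S := le_trans (abs_nonneg _) (le_ciSup hSb 0)
  have hHb : BddAbove (Set.range fun q : ES m × ES m =>
      if q.1 = q.2 then 0 else ‖fderiv ℝ u q.1 - fderiv ℝ u q.2‖ / ‖q.1 - q.2‖ ^ β) := by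
    refine ⟨max Ch 0, ?_⟩
    rintro _ ⟨q, rfl⟩
    by_cases hq : q.1 = q.2
    · simp [hq]
    · simp only [hq, if_false]
      have hqn : 0 < ‖q.1 - q.2‖ := by
        rwa [norm_pos_iff, sub_ne_zero]
      have hqp : 0 < ‖q.1 - q.2‖ ^ β := Real.rpow_pos_of_pos hqn β
      refine le_trans ?_ (le_max_left _ _)
      rw [div_le_iff₀ hqp]
      exact hCh q.1 q.2
  have hHle : ∀ q : ES m × ES m,
      (if q.1 = q.2 then 0 else ‖fderiv ℝ u q.1 - fderiv ℝ u q.2‖ / ‖q.1 - q.2‖ ^ β) ≤ H :=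
    fun q => le_ciSup hHb q
  have hH0 : 0 ≤ H := by simpa using hHle (0, 0)
  have hH : ∀ x y : ES m, ‖fderiv ℝ u x - fderiv ℝ u y‖ ≤ H * ‖x - y‖ ^ β := by
    intro x y
    by_cases hxy : x = y
    · simp [hxy, Real.zero_rpow (ne_of_gt hβ0)]
    · have h1 := hHle (x, y)
      simp only [hxy, if_false] at h1
      have hqn : 0 < ‖x - y‖ := by rwa [norm_pos_iff, sub_ne_zero]
      have hqp : 0 < ‖x - y‖ ^ β := Real.rpow_pos_of_pos hqn β
      rw [div_le_iff₀ hqp] at h1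
      linarith [h1]
  have hLip : ∀ x y : ES m, |u x - u y| ≤ M * ‖x - y‖ := by
    intro x y
    have := convex_univ.norm_image_sub_le_of_norm_fderiv_le
      (fun z _ => hdiff z) (fun z _ => hM z) (Set.mem_univ y) (Set.mem_univ x)
    simpa [Real.norm_eq_abs] using this
  -- second order estimate
  have hsec : ∀ h : ES m, |u (s + h) - u s - fderiv ℝ u s h| ≤ H * ‖h‖ ^ β * ‖h‖ := by
    intro h
    have key := Convex.norm_image_sub_le_of_norm_fderiv_le'
      (s := Metric.closedBall s ‖h‖) (φ := fderiv ℝ u s) (C := H * ‖h‖ ^ β)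
      (f := u) (x := s) (y := s + h)
      (fun z _ => hdiff z)
      (fun z hz => by
        refine le_trans (hH z s) ?_
        have hzs : ‖z - s‖ ≤ ‖h‖ := by
          rw [← dist_eq_norm]; exact Metric.mem_closedBall.mp hz
        exact mul_le_mul_of_nonneg_left
          (Real.rpow_le_rpow (norm_nonneg _) hzs (le_of_lt hβ0)) hH0)
      (convex_closedBall _ _) (Metric.mem_closedBall_self (norm_nonneg h))
      (by simp [Metric.mem_closedBall, dist_eq_norm])
    simpa [Real.norm_eq_abs] using key
  have hT : 0 < ‖t‖ := norm_pos_iff.mpr ht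
  set T : ℝ := ‖t‖ with hT_def
  set A : ℝ := (u s - u (s - t)) / T with hA_def
  set B : ℝ := (u s - u (s + t)) / T with hB_def
  have hAle : |A| ≤ M := by
    rw [hA_def, abs_div, abs_of_pos hT, div_le_iff₀ hT]
    have := hLip s (s - t)
    simpa [sub_sub_cancel] using this
  have hBle : |B| ≤ M := by
    rw [hB_def, abs_div, abs_of_pos hT, div_le_iff₀ hT]
    have := hLip s (s + t)
    have he : s - (s + t) = -t := by abel
    rw [he, norm_neg] at this
    exact this
  have hABsum : |A + B| ≤ 2 * H * T ^ β := by
    have h1 := hsec t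
    have h2 := hsec (-t)
    rw [norm_neg] at h2
    have he2 : s + -t = s - t := by abel
    rw [he2] at h2
    have hDt : fderiv ℝ u s (-t) = -(fderiv ℝ u s t) := map_neg _ _
    rw [hDt] at h2
    have hnum : |(u s - u (s - t)) + (u s - u (s + t))| ≤ 2 * H * T ^ β * T := by
      have : (u s - u (s - t)) + (u s - u (s + t)) =
          -((u (s + t) - u s - fderiv ℝ u s t) + (u (s - t) - u s - -(fderiv ℝ u s t))) := by
        ring
      rw [this, abs_neg]
      calc |(u (s + t) - u s - fderiv ℝ u s t) + (u (s - t) - u s - -(fderiv ℝ u s t))|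
          ≤ |u (s + t) - u s - fderiv ℝ u s t| + |u (s - t) - u s - -(fderiv ℝ u s t)| :=
            abs_add_le _ _
        _ ≤ H * T ^ β * T + H * T ^ β * T := add_le_add h1 h2
        _ = 2 * H * T ^ β * T := by ring
    have : A + B = ((u s - u (s - t)) + (u s - u (s + t))) / T := by
      rw [hA_def, hB_def]; ring
    rw [this, abs_div, abs_of_pos hT, div_le_iff₀ hT]
    exact hnum
  -- kernel values
  have hKt : Kker m ϱ ε u s t = (1 + A ^ 2 + ε ^ 2 / T ^ 2) ^ (-p) := by
    rw [Kker, hA_def, hT_def, hp_def]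
  have hKnt : Kker m ϱ ε u s (-t) = (1 + B ^ 2 + ε ^ 2 / T ^ 2) ^ (-p) := by
    rw [Kker, hB_def, hT_def, hp_def, norm_neg, sub_neg_eq_add]
  have hε2 : 0 ≤ ε ^ 2 / T ^ 2 := div_nonneg (sq_nonneg _) (sq_nonneg _)
  have hXge : (1:ℝ) ≤ 1 + A ^ 2 + ε ^ 2 / T ^ 2 := by nlinarith [sq_nonneg A]
  have hYge : (1:ℝ) ≤ 1 + B ^ 2 + ε ^ 2 / T ^ 2 := by nlinarith [sq_nonneg B]
  have hTβ : 0 < T ^ β := Real.rpow_pos_of_pos hT β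
  -- first bound
  have hbound1 : |Kker m ϱ ε u s t - Kker m ϱ ε u s (-t)| ≤ 4 * p * M * H * T ^ β := by
    rw [hKt, hKnt]
    refine le_trans (rpow_lip hp hXge hYge) ?_
    have heq : (1 + A ^ 2 + ε ^ 2 / T ^ 2) - (1 + B ^ 2 + ε ^ 2 / T ^ 2) = A ^ 2 - B ^ 2 := by
      ring
    have h1 : |A ^ 2 - B ^ 2| = |A + B| * |A - B| := by
      rw [← abs_mul]; ring_nf
    have h2 : |A - B| ≤ 2 * M := by
      calc |A - B| ≤ |A| + |B| := abs_sub _ _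
        _ ≤ M + M := add_le_add hAle hBle
        _ = 2 * M := by ring
    calc p * |(1 + A ^ 2 + ε ^ 2 / T ^ 2) - (1 + B ^ 2 + ε ^ 2 / T ^ 2)| =
        p * (|A + B| * |A - B|) := by rw [heq, h1]
      _ ≤ p * ((2 * H * T ^ β) * (2 * M)) := by
          refine mul_le_mul_of_nonneg_left ?_ (le_of_lt hp)
          exact mul_le_mul hABsum h2 (abs_nonneg _)
            (mul_nonneg (mul_nonneg (by norm_num) hH0) (le_of_lt hTβ))
      _ = 4 * p * M * H * T ^ β := by ring
  -- second bound
  have hone : ∀ X : ℝ, 1 ≤ X → 0 ≤ X ^ (-p) ∧ X ^ (-p) ≤ 1 := fun X hX =>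
    ⟨Real.rpow_nonneg (by linarith) _,
     Real.rpow_le_one_of_one_le_of_nonpos hX (by linarith)⟩
  have hbound2 : |Kker m ϱ ε u s t - Kker m ϱ ε u s (-t)| ≤ 1 := by
    rw [hKt, hKnt]
    obtain ⟨h1, h2⟩ := hone _ hXge
    obtain ⟨h3, h4⟩ := hone _ hYge
    rw [abs_sub_le_iff]
    constructor <;> linarith
  -- final combination
  set Nn : ℝ := c1betaNorm β u with hNn_def
  have hNeq : Nn = S + M + H := rfl
  have hNn0 : 0 ≤ Nn := by rw [hNeq]; linarith
  have h1N : (1:ℝ) ≤ 1 + Nn := by linarith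
  have hc0 : 0 ≤ c := by linarith
  have hrp1 : (1:ℝ) ≤ (1 + Nn) ^ c := Real.one_le_rpow h1N hc0
  have hMH : M * H ≤ (1 + Nn) ^ c := by
    have h2 : M * H ≤ (1 + Nn) * (1 + Nn) := by
      refine mul_le_mul ?_ ?_ hH0 (by linarith)
      · rw [hNeq]; linarith
      · rw [hNeq]; linarith
    have h3 : (1 + Nn) * (1 + Nn) = (1 + Nn) ^ (2:ℝ) := by
      rw [Real.rpow_two]; ring
    have h4 : (1 + Nn) ^ (2:ℝ) ≤ (1 + Nn) ^ c :=
      Real.rpow_le_rpow_of_exponent_le h1N hc2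
    calc M * H ≤ (1 + Nn) * (1 + Nn) := h2
      _ = (1 + Nn) ^ (2:ℝ) := h3
      _ ≤ (1 + Nn) ^ c := h4
  have hD1 : (1:ℝ) ≤ c * (1 + Nn) ^ c := by
    calc (1:ℝ) = 1 * 1 := by ring
      _ ≤ c * (1 + Nn) ^ c :=
        mul_le_mul (le_of_lt hc1) hrp1 (by norm_num) hc0
  have hDmain : 4 * p * M * H ≤ c * (1 + Nn) ^ c := by
    have h5 : 4 * p * M * H = (4 * p) * (M * H) := by ring
    rw [h5]
    exact mul_le_mul (le_max_left _ _) hMH (mul_nonneg hM0 hH0) hc0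
  rcases min_cases (T ^ β) (1:ℝ) with ⟨hmin, hcase⟩ | ⟨hmin, hcase⟩
  · rw [hmin]
    calc |Kker m ϱ ε u s t - Kker m ϱ ε u s (-t)| ≤ 4 * p * M * H * T ^ β := hbound1
      _ ≤ c * (1 + Nn) ^ c * T ^ β := mul_le_mul_of_nonneg_right hDmain (le_of_lt hTβ)
  · rw [hmin, mul_one]
    exact le_trans hbound2 hD1
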